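/- SearchRole correctness: given a list L of server-encrypted roles, each of the form (h^(rᵢ+σᵢ), H(h^(rᵢ))), and a server trapdoor T = h^σ for role fingerprint σ, the list-scanning procedure returning true iff some element matches (Algorithm 12) returns true if and only if σ ∈ {σ₁, …, σₙ}, assuming H is injective and h has prime order q. -/

import Mathlib

/-- The Match algorithm on a server-encrypted element `(c₁, c₂)` and trapdoor `T`. -/
def MatchAlg {G β : Type*} [Group G] [DecidableEq β] (H : G → β) (c : G × β) (T : G) : Bool :=
  decide (c.2 = H (c.1 * T⁻¹))

/-- SearchRole scans a list of server-encrypted roles for a match with the trapdoor. -/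
def SearchRole {G β : Type*} [Group G] [DecidableEq β] (H : G → β)
    (L : List (G × β)) (T : G) : Bool :=
  L.any (fun c => MatchAlg H c T)

/-- SearchRole correctness: on the list of server-encrypted roles
`(h^(rᵢ+σᵢ), H(h^(rᵢ)))` with trapdoor `h^σ`, the scan returns `true`
iff `σ` is one of the encrypted role fingerprints `σᵢ`. -/
theorem searchRole_correct {G β : Type*} [CommGroup G] [DecidableEq β]
    (q : ℕ) [Fact q.Prime] [NeZero q] (h : G) (hord : orderOf h = q)
    (H : G → β) (hH : Function.Injective H) (roles : List (ZMod q × ZMod q))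
    (σ : ZMod q) :
    SearchRole H (roles.map (fun p => (h ^ (p.2 + p.1).val, H (h ^ p.2.val)))) (h ^ σ.val)
      = true ↔ ∃ p ∈ roles, p.1 = σ := by
  simp only [SearchRole, MatchAlg, List.any_map, List.any_eq_true, Function.comp,
    decide_eq_true_eq]
  have key : ∀ p : ZMod q × ZMod q,
      (H (h ^ p.2.val) = H (h ^ (p.2 + p.1).val * (h ^ σ.val)⁻¹)) ↔ p.1 = σ := by
    intro p
    constructor
    · intro hp
      have := hH hp
      rw [eq_mul_inv_iff_mul_eq, ← pow_add, pow_eq_pow_iff_modEq, hord,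
        ← ZMod.natCast_eq_natCast_iff] at this
      push_cast [ZMod.natCast_val, ZMod.cast_id] at this
      linear_combination -this
    · rintro rfl
      congr 1
      rw [eq_mul_inv_iff_mul_eq, ← pow_add, pow_eq_pow_iff_modEq, hord,
        ← ZMod.natCast_eq_natCast_iff]
      push_cast [ZMod.natCast_val, ZMod.cast_id]
      ring
  simp only [key]
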